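/- Let X = (a_1, ..., a_m) be a finite list of nonzero vectors spanning ℂ^n, let μ : {1,...,m} → ℂ, and adopt the notation X_p, P(X,μ), L(X_p) as follows: X_p := { i : ⟨a_i | p⟩ + μ_i = 0 }, P(X,μ) := { p ∈ ℂ^n : {a_i : i ∈ X_p} spans ℂ^n }, and L(X_p) := the family of subsets ℓ ⊆ X_p with {a_i : i ∈ ℓ} spanning ℂ^n. Suppose complex numbers c_ℓ (indexed by pairs (p, ℓ) with p ∈ P(X,μ), ℓ ∈ L(X_p)) satisfy, in the field K = ℂ(x_1,...,x_n), the identity ∏_{i=1}^m 1/(a_i + μ_i) = Σ_{p ∈ P(X,μ)} Σ_{ℓ ∈ L(X_p)} c_ℓ · ∏_{i ∈ ℓ} 1/(a_i + μ_i). Then for every p ∈ P(X,μ), the coefficient attached to the full set ℓ = X_p is uniquely determined and equals c_{X_p} = ∏_{i ∉ X_p} 1/(⟨a_i | p⟩ + μ_i). -/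

import Mathlib

open MvPolynomial

/-- The linear polynomial `∑ j, a j * x j ∈ ℂ[x_1, …, x_n]` attached to a vector `a ∈ ℂ^n`. -/
noncomputable def linForm {n : ℕ} (a : Fin n → ℂ) : MvPolynomial (Fin n) ℂ :=
  ∑ j, C (a j) * X j

/-- The element `a i + μ i` of the rational function field `K = ℂ(x_1, …, x_n)`. -/
noncomputable def affForm {n m : ℕ} (a : Fin m → (Fin n → ℂ)) (μ : Fin m → ℂ) (i : Fin m) :
    FractionRing (MvPolynomial (Fin n) ℂ) :=
  algebraMap (MvPolynomial (Fin n) ℂ) (FractionRing (MvPolynomial (Fin n) ℂ))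
    (linForm (a i) + C (μ i))

/-- `X_p`: the set of indices `i` such that `⟨a i | p⟩ + μ i = 0`. -/
def Xp {n m : ℕ} (a : Fin m → (Fin n → ℂ)) (μ : Fin m → ℂ) (p : Fin n → ℂ) : Set (Fin m) :=
  {i | (∑ j, a i j * p j) + μ i = 0}

/-- `X_p` as a finite set of indices. -/
noncomputable def XpFinset {n m : ℕ} (a : Fin m → (Fin n → ℂ)) (μ : Fin m → ℂ)
    (p : Fin n → ℂ) : Finset (Fin m) :=
  (Set.toFinite (Xp a μ p)).toFinset

/-- `P(X, μ)`: the points of the arrangement, i.e. the points `p` such that the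
vectors `{a i : i ∈ X_p}` span `ℂ^n`. -/
def armPoints {n m : ℕ} (a : Fin m → (Fin n → ℂ)) (μ : Fin m → ℂ) : Set (Fin n → ℂ) :=
  {p | Submodule.span ℂ (a '' Xp a μ p) = ⊤}

lemma eval_linForm {n : ℕ} (a p : Fin n → ℂ) : eval p (linForm a) = ∑ j, a j * p j := by
  simp [linForm]

lemma linForm_add_C_ne_zero {n : ℕ} {a : Fin n → ℂ} (ha : a ≠ 0) (μ : ℂ) :
    linForm a + C μ ≠ 0 := by
  classical
  obtain ⟨j, hj⟩ := Function.ne_iff.mp ha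
  intro h
  have h1 : coeff (Finsupp.single j 1) (linForm a + C μ) = a j := by
    rw [coeff_add, coeff_C, if_neg (by simp [Finsupp.single_eq_zero, eq_comm])]
    simp only [linForm, coeff_sum, coeff_C_mul, coeff_X']
    rw [Finset.sum_eq_single j]
    · simp
    · intro k _ hk
      rw [if_neg, mul_zero]
      intro hkj
      exact hk (Finsupp.single_left_injective (one_ne_zero) hkj)
    · simp
  rw [h, coeff_zero] at h1
  exact hj h1.symm

lemma eq_of_span_dot {n : ℕ} {s : Set (Fin n → ℂ)} (hs : Submodule.span ℂ s = ⊤)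
    {p q : Fin n → ℂ} (h : ∀ w ∈ s, ∑ j, w j * p j = ∑ j, w j * q j) : p = q := by
  classical
  let φ : (Fin n → ℂ) →ₗ[ℂ] ℂ := ∑ j, (p j - q j) • LinearMap.proj j
  have hφ : ∀ w, φ w = ∑ j, (p j - q j) * w j := by
    intro w
    simp [φ, LinearMap.sum_apply, smul_eq_mul]
  have hker : Submodule.span ℂ s ≤ LinearMap.ker φ := by
    apply Submodule.span_le.mpr
    intro w hw
    simp only [SetLike.mem_coe, LinearMap.mem_ker, hφ]
    have : ∑ j, (p j - q j) * w j = (∑ j, w j * p j) - ∑ j, w j * q j := by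
      rw [← Finset.sum_sub_distrib]
      exact Finset.sum_congr rfl fun j _ => by ring
    rw [this, h w hw, sub_self]
  rw [hs, top_le_iff] at hker
  funext j
  have h0 : φ (Pi.single j 1) = 0 := by
    have hm : Pi.single j 1 ∈ LinearMap.ker φ := by rw [hker]; trivial
    exact LinearMap.mem_ker.mp hm
  rw [hφ] at h0
  simp only [Pi.single_apply, mul_ite, mul_one, mul_zero, Finset.sum_ite_eq',
    Finset.mem_univ, if_pos] at h0
  exact sub_eq_zero.mp h0

lemma point_unique {n m : ℕ} (a : Fin m → (Fin n → ℂ)) (μ : Fin m → ℂ)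
    {p q : Fin n → ℂ} (hp : Submodule.span ℂ (a '' Xp a μ p) = ⊤)
    (hsub : Xp a μ p ⊆ Xp a μ q) : p = q := by
  apply eq_of_span_dot hp
  rintro w ⟨i, hi, rfl⟩
  have h1 : (∑ j, a i j * p j) + μ i = 0 := hi
  have h2 : (∑ j, a i j * q j) + μ i = 0 := hsub hi
  linear_combination h1 - h2

lemma armPoints_finite {n m : ℕ} (a : Fin m → (Fin n → ℂ)) (μ : Fin m → ℂ) :
    (armPoints a μ).Finite := by
  apply Set.Finite.of_finite_image (f := XpFinset a μ) (Set.toFinite _)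
  intro p hp q hq hpq
  have hXeq : Xp a μ p = Xp a μ q := by
    have := congrArg (fun (s : Finset (Fin m)) => (s : Set (Fin m))) hpq
    simpa [XpFinset, Set.Finite.coe_toFinset] using this
  exact point_unique a μ hp (le_of_eq hXeq)

/-- In any decomposition
`∏ i, 1/(a i + μ i) = ∑_{p ∈ P(X,μ)} ∑_{ℓ ∈ L(X_p)} c_ℓ ∏_{i ∈ ℓ} 1/(a i + μ i)`
in `K = ℂ(x_1, …, x_n)`, the coefficient attached to the full set `ℓ = X_p` is uniquely
determined and equals `c_{X_p} = ∏_{i ∉ X_p} 1/(⟨a i | p⟩ + μ i)`. -/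
theorem coefficient_of_full_set {n m : ℕ} (a : Fin m → (Fin n → ℂ)) (μ : Fin m → ℂ)
    (ha : ∀ i, a i ≠ 0)
    (hspan : Submodule.span ℂ (Set.range a) = ⊤)
    (c : (Fin n → ℂ) → Finset (Fin m) → ℂ)
    (hc : ∏ i, (affForm a μ i)⁻¹ =
        ∑ᶠ p ∈ armPoints a μ,
          ∑ᶠ ℓ ∈ {ℓ : Finset (Fin m) |
              (ℓ : Set (Fin m)) ⊆ Xp a μ p ∧ Submodule.span ℂ (a '' (ℓ : Set (Fin m))) = ⊤},
            algebraMap (MvPolynomial (Fin n) ℂ) (FractionRing (MvPolynomial (Fin n) ℂ))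
                (C (c p ℓ)) *
              ∏ i ∈ ℓ, (affForm a μ i)⁻¹) :
    ∀ p ∈ armPoints a μ,
      c p (XpFinset a μ p) = ∏ i ∈ (XpFinset a μ p)ᶜ, ((∑ j, a i j * p j) + μ i)⁻¹ := by
  classical
  intro p hp
  set R := MvPolynomial (Fin n) ℂ
  set K := FractionRing R
  set A : R →+* K := (algebraMap R K) with hAdef
  set f : Fin m → R := fun i => linForm (a i) + C (μ i) with hfdef
  have haff : ∀ i, affForm a μ i = A (f i) := fun i => rfl
  have hf : ∀ i, f i ≠ 0 := fun i => linForm_add_C_ne_zero (ha i) (μ i)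
  have hAinj : Function.Injective A := IsFractionRing.injective R K
  have hAf : ∀ i, A (f i) ≠ 0 := fun i h => hf i (hAinj (by rw [h, map_zero]))
  have hPfin : (armPoints a μ).Finite := armPoints_finite a μ
  set P : Finset (Fin n → ℂ) := hPfin.toFinset with hPdef
  set L : (Fin n → ℂ) → Finset (Finset (Fin m)) := fun q =>
    (Set.toFinite {ℓ : Finset (Fin m) |
      (ℓ : Set (Fin m)) ⊆ Xp a μ q ∧
        Submodule.span ℂ (a '' (ℓ : Set (Fin m))) = ⊤}).toFinset with hLdef
  -- rewrite hc using finite sums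
  have hc2 : ∏ i, (A (f i))⁻¹ =
      ∑ q ∈ P, ∑ ℓ ∈ L q, A (C (c q ℓ)) * ∏ i ∈ ℓ, (A (f i))⁻¹ := by
    simp only [haff] at hc
    rw [hc, finsum_mem_eq_finite_toFinset_sum _ hPfin]
    exact Finset.sum_congr rfl fun q _ => finsum_mem_eq_finite_toFinset_sum _ (Set.toFinite _)
  -- multiply both sides by ∏ i, A (f i)
  have hmul := congrArg (fun x => x * ∏ i, A (f i)) hc2
  have hlhs : (∏ i, (A (f i))⁻¹) * ∏ i, A (f i) = 1 := by
    rw [← Finset.prod_mul_distrib]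
    exact Finset.prod_eq_one fun i _ => inv_mul_cancel₀ (hAf i)
  have hterm : ∀ (q : Fin n → ℂ) (ℓ : Finset (Fin m)),
      (A (C (c q ℓ)) * ∏ i ∈ ℓ, (A (f i))⁻¹) * ∏ i, A (f i)
        = A (C (c q ℓ) * ∏ i ∈ ℓᶜ, f i) := by
    intro q ℓ
    rw [← Finset.prod_mul_prod_compl ℓ (fun i => A (f i)), map_mul, map_prod,
      Finset.prod_inv_distrib]
    have hne : (∏ i ∈ ℓ, A (f i)) ≠ 0 := Finset.prod_ne_zero_iff.mpr fun i _ => hAf i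
    rw [mul_assoc, inv_mul_cancel_left₀ hne]
  rw [hlhs, Finset.sum_mul] at hmul
  simp only [Finset.sum_mul, hterm] at hmul
  -- pull algebraMap out and use injectivity
  have hpoly : (1 : R) = ∑ q ∈ P, ∑ ℓ ∈ L q, C (c q ℓ) * ∏ i ∈ ℓᶜ, f i := by
    apply hAinj
    rw [map_one, map_sum]
    simpa only [map_sum] using hmul
  -- evaluate at p
  set v : Fin m → ℂ := fun i => (∑ j, a i j * p j) + μ i with hvdef
  have hv : (1 : ℂ) = ∑ q ∈ P, ∑ ℓ ∈ L q, c q ℓ * ∏ i ∈ ℓᶜ, v i := by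
    have := congrArg (eval p) hpoly
    simpa [map_sum, map_mul, map_prod, eval_linForm, hfdef, hvdef] using this
  -- membership facts
  have hXcoe : ((XpFinset a μ p : Finset (Fin m)) : Set (Fin m)) = Xp a μ p :=
    Set.Finite.coe_toFinset _
  have hXmem : ∀ i, i ∈ XpFinset a μ p ↔ v i = 0 := by
    intro i
    rw [XpFinset, Set.Finite.mem_toFinset]
    exact Iff.rfl
  have hpP : p ∈ P := hPfin.mem_toFinset.mpr hp
  have hXL : XpFinset a μ p ∈ L p := by
    rw [hLdef, Set.Finite.mem_toFinset]
    exact ⟨by rw [hXcoe], by rw [hXcoe]; exact hp⟩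
  -- vanishing of all other terms
  have hvanish : ∀ q ∈ P, ∀ ℓ ∈ L q, ¬(q = p ∧ ℓ = XpFinset a μ p) →
      c q ℓ * ∏ i ∈ ℓᶜ, v i = 0 := by
    intro q hq ℓ hℓ hne
    by_contra hterm0
    have hprod : (∏ i ∈ ℓᶜ, v i) ≠ 0 := fun h => hterm0 (by rw [h, mul_zero])
    have hℓ' := (Set.Finite.mem_toFinset _).mp hℓ
    have hXsub : Xp a μ p ⊆ (ℓ : Set (Fin m)) := by
      intro i hi
      by_contra hiℓ
      exact hprod (Finset.prod_eq_zero (Finset.mem_compl.mpr hiℓ) hi)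
    have hqp : p = q := point_unique a μ hp (hXsub.trans hℓ'.1)
    apply hne
    refine ⟨hqp.symm, ?_⟩
    apply Finset.coe_injective
    rw [hXcoe]
    apply Set.Subset.antisymm
    · rw [← hqp] at hℓ'
      exact hℓ'.1
    · exact hXsub
  -- reduce double sum to single term
  have hsingle : ∑ q ∈ P, ∑ ℓ ∈ L q, c q ℓ * ∏ i ∈ ℓᶜ, v i
      = c p (XpFinset a μ p) * ∏ i ∈ (XpFinset a μ p)ᶜ, v i := by
    rw [Finset.sum_eq_single_of_mem p hpP]
    · rw [Finset.sum_eq_single_of_mem (XpFinset a μ p) hXL]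
      intro ℓ hℓ hℓne
      exact hvanish p hpP ℓ hℓ (fun h => hℓne h.2)
    · intro q hq hqne
      apply Finset.sum_eq_zero
      intro ℓ hℓ
      exact hvanish q hq ℓ hℓ (fun h => hqne h.1)
  rw [hsingle] at hv
  -- conclude
  have hcv : c p (XpFinset a μ p) = (∏ i ∈ (XpFinset a μ p)ᶜ, v i)⁻¹ :=
    eq_inv_of_mul_eq_one_left hv.symm
  rw [hcv, ← Finset.prod_inv_distrib]
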